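/- For every real λ > 0, every nonnegative integer n, and all integers r, m with 1 ≤ r < m, one has ((m−r)/m)·φ(n, λ) + (r/m)·φ(n+m, λ) < φ(n+r, λ), where φ(k, λ) = s_k(λ)/s_{k+1}(λ). -/

import Mathlib

/-- The `n`-th partial sum of the Taylor series of the exponential function. -/
noncomputable def s (n : ℕ) (a : ℝ) : ℝ :=
  ∑ j ∈ Finset.range (n + 1), a ^ j / (Nat.factorial j : ℝ)

/-- The ratio of consecutive partial sums of the exponential series. -/
noncomputable def phi (n : ℕ) (a : ℝ) : ℝ := s n a / s (n + 1) a

lemma s_pos (a : ℝ) (ha : 0 < a) (n : ℕ) : 0 < s n a := by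
  apply Finset.sum_pos
  · intro j _
    have : (0:ℝ) < (Nat.factorial j : ℝ) := by positivity
    positivity
  · exact ⟨0, Finset.mem_range.2 (Nat.succ_pos n)⟩

lemma s_succ (a : ℝ) (n : ℕ) :
    s (n+1) a = s n a + a ^ (n+1) / (Nat.factorial (n+1) : ℝ) := by
  simp [s, Finset.sum_range_succ]

lemma s_lt_succ (a : ℝ) (ha : 0 < a) (n : ℕ) : s n a < s (n+1) a := by
  rw [s_succ]
  have h1 : (0:ℝ) < (Nat.factorial (n+1) : ℝ) := by positivity
  have : 0 < a ^ (n+1) / (Nat.factorial (n+1) : ℝ) := by positivity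
  linarith

lemma s_rec (a : ℝ) (n : ℕ) :
    ((n:ℝ)+2) * (s (n+2) a - s (n+1) a) = a * (s (n+1) a - s n a) := by
  have h2 : s (n+2) a - s (n+1) a = a ^ (n+2) / (Nat.factorial (n+2) : ℝ) := by
    rw [s_succ a (n+1)]; ring
  have h1 : s (n+1) a - s n a = a ^ (n+1) / (Nat.factorial (n+1) : ℝ) := by
    rw [s_succ a n]; ring
  rw [h1, h2]
  have hf : (Nat.factorial (n+2) : ℝ) = ((n:ℝ)+2) * (Nat.factorial (n+1) : ℝ) := by
    rw [Nat.factorial_succ]; push_cast; ring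
  have hfp : (0:ℝ) < (Nat.factorial (n+1) : ℝ) := by positivity
  rw [hf]
  field_simp
  ring

set_option maxHeartbeats 1000000 in
/-- The main inductive step for the invariant. -/
lemma step (a κ w y z : ℝ) (ha : 0 < a) (hκ : 1 ≤ κ) (hw : 0 < w) (hy : 0 < y)
    (hrec : (κ+1)*z = (a+κ+1)*y - a*w)
    (H1 : 0 < 2*a^2*w^2 - a*(a+3*κ+2)*w*y + κ*(a+κ+1)*y^2)
    (H2 : 4*a*w < (a+3*κ+2)*y) :
    (0 < 2*a^2*y^2 - a*(a+3*κ+5)*y*z + (κ+1)*(a+κ+2)*z^2) ∧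
      4*a*y < (a+3*κ+5)*z := by
  have hκ0 : (0:ℝ) < κ + 1 := by linarith
  have hrec0 : (κ+1)*z - ((a+κ+1)*y - a*w) = 0 := by linarith
  constructor
  · -- the quadratic invariant
    set C' : ℝ := (κ+1)*(κ+2)^2 + a*κ*(a-2*κ-3) with hC'
    set E' : ℝ := a*((a-κ-2)^2 + 2*a) with hE'
    have hE : 0 < E' := by
      have h1 : 0 < (a-κ-2)^2 + 2*a := by positivity
      rw [hE']; positivity
    -- key identity (modulo the recursion)
    have idC : 2*(κ+1)^2*(2*a^2*y^2 - a*(a+3*κ+5)*y*z + (κ+1)*(a+κ+2)*z^2)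
        = (κ+1)*((a+κ+2)*(2*a^2*w^2 - a*(a+3*κ+2)*w*y + κ*(a+κ+1)*y^2)
            + (C'*y - E'*w)*y)
          + (2*(κ+1)*((κ+1)*(κ+2)*(z+y) + a*(κ+1)*z - a*(κ+2)*(y+w) - a^2*w))
            * ((κ+1)*z - ((a+κ+1)*y - a*w)) := by
      rw [hC', hE']; ring
    rw [hrec0, mul_zero, add_zero] at idC
    have h2' : 0 < (a+3*κ+2)*y - 4*a*w := by linarith
    have hinner : 0 < (a+κ+2)*(2*a^2*w^2 - a*(a+3*κ+2)*w*y + κ*(a+κ+1)*y^2)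
        + (C'*y - E'*w)*y := by
      rcases lt_or_ge (a*(a+3*κ+2)*E') (4*a^2*C') with hA | hB
      · -- case A: 4a²C' > bE' : linear certificate
        have idA : 4*a^2*((a+κ+2)*(2*a^2*w^2 - a*(a+3*κ+2)*w*y + κ*(a+κ+1)*y^2)
              + (C'*y - E'*w)*y)
            = 4*a^2*(a+κ+2)*(2*a^2*w^2 - a*(a+3*κ+2)*w*y + κ*(a+κ+1)*y^2)
              + (4*a^2*C' - a*(a+3*κ+2)*E')*y^2
              + E'*y*(a*((a+3*κ+2)*y - 4*a*w)) := by ring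
        have t1 : 0 < 4*a^2*(a+κ+2)*(2*a^2*w^2 - a*(a+3*κ+2)*w*y + κ*(a+κ+1)*y^2) := by
          have h4 : (0:ℝ) < 4*a^2*(a+κ+2) := by positivity
          exact mul_pos h4 H1
        have t2 : 0 < (4*a^2*C' - a*(a+3*κ+2)*E')*y^2 :=
          mul_pos (by linarith) (by positivity)
        have t3 : 0 < E'*y*(a*((a+3*κ+2)*y - 4*a*w)) :=
          mul_pos (mul_pos hE hy) (mul_pos ha h2')
        have h4 : 0 < 4*a^2*((a+κ+2)*(2*a^2*w^2 - a*(a+3*κ+2)*w*y + κ*(a+κ+1)*y^2)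
              + (C'*y - E'*w)*y) := by
          rw [idA]; linarith
        have h4a : (0:ℝ) < 4*a^2 := by positivity
        nlinarith [h4, h4a]
      · -- case B: 4a²C' ≤ bE' : show C'y - E'w > 0
        have hkey : 0 < C'*y - E'*w := by
          by_contra hcon
          push_neg at hcon
          have idB : E'^2*(2*a^2*w^2 - a*(a+3*κ+2)*w*y + κ*(a+κ+1)*y^2) + 4*a^5*y^2
              = (E'*w - C'*y)*(2*a^2*E'*w + (2*a^2*C' - a*(a+3*κ+2)*E')*y) := by
            rw [hC', hE']; ring
          have hf1 : 0 < E'*(a*((a+3*κ+2)*y - 4*a*w)) := mul_pos hE (mul_pos ha h2')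
          have hf2 : (4*a^2*C')*y ≤ (a*(a+3*κ+2)*E')*y :=
            mul_le_mul_of_nonneg_right hB hy.le
          have hsecond : 2*a^2*E'*w + (2*a^2*C' - a*(a+3*κ+2)*E')*y < 0 := by
            nlinarith [hf1, hf2]
          have hfirst : 0 ≤ E'*w - C'*y := by linarith
          have hRHSle : (E'*w - C'*y)*(2*a^2*E'*w + (2*a^2*C' - a*(a+3*κ+2)*E')*y) ≤ 0 :=
            mul_nonpos_of_nonneg_of_nonpos hfirst hsecond.le
          have hE2 : 0 < E'^2 := by positivity
          have hLHSpos : 0 < E'^2*(2*a^2*w^2 - a*(a+3*κ+2)*w*y + κ*(a+κ+1)*y^2)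
              + 4*a^5*y^2 := by
            have h5 : 0 < E'^2*(2*a^2*w^2 - a*(a+3*κ+2)*w*y + κ*(a+κ+1)*y^2) :=
              mul_pos hE2 H1
            have h6 : 0 < 4*a^5*y^2 := by positivity
            linarith
          rw [idB] at hLHSpos
          linarith
        have h5 : 0 < (a+κ+2)*(2*a^2*w^2 - a*(a+3*κ+2)*w*y + κ*(a+κ+1)*y^2) :=
          mul_pos (by linarith) H1
        have h6 : 0 < (C'*y - E'*w)*y := mul_pos hkey hy
        linarith
    have hfin : 0 < 2*(κ+1)^2*(2*a^2*y^2 - a*(a+3*κ+5)*y*z + (κ+1)*(a+κ+2)*z^2) := by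
      rw [idC]; exact mul_pos hκ0 hinner
    nlinarith [hfin, sq_nonneg (κ+1), hκ0]
  · -- branch condition propagates
    have idG2 : 4*(κ+1)*((a+3*κ+5)*z - 4*a*y)
        = (a+3*κ+5)*((a+3*κ+2)*y - 4*a*w) + (3*(a-κ)^2 + a + 11*κ + 10)*y
          + 4*(a+3*κ+5) * ((κ+1)*z - ((a+κ+1)*y - a*w)) := by ring
    rw [hrec0, mul_zero, add_zero] at idG2
    have t1 : 0 < (a+3*κ+5)*((a+3*κ+2)*y - 4*a*w) :=
      mul_pos (by linarith) (by linarith)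
    have t2 : 0 < (3*(a-κ)^2 + a + 11*κ + 10)*y := by
      apply mul_pos (by positivity) hy
    nlinarith [idG2, t1, t2]

/-- The invariant holds for all `k`. -/
lemma invariant (a : ℝ) (ha : 0 < a) : ∀ k : ℕ,
    (0 < 2*a^2*(s k a)^2 - a*(a+3*(k:ℝ)+5)*(s k a)*(s (k+1) a)
        + ((k:ℝ)+1)*(a+(k:ℝ)+2)*(s (k+1) a)^2) ∧
      4*a*(s k a) < (a+3*(k:ℝ)+5)*(s (k+1) a) := by
  intro k
  induction k with
  | zero =>
    have h0 : s 0 a = 1 := by simp [s]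
    have h1 : s 1 a = 1 + a := by
      rw [s_succ, h0]; norm_num
    rw [h0, h1]
    push_cast
    constructor
    · have : 2*a^2*(1:ℝ)^2 - a*(a+3*0+5)*1*(1+a) + ((0:ℝ)+1)*(a+0+2)*(1+a)^2 = 2 := by
        ring
      rw [this]; norm_num
    · nlinarith [sq_nonneg a, ha]
  | succ n ih =>
    obtain ⟨H1, H2⟩ := ih
    have hrec : (((n:ℝ)+1)+1) * s (n+2) a = (a+((n:ℝ)+1)+1) * s (n+1) a - a * s n a := by
      have := s_rec a n
      ring_nf
      ring_nf at this
      linarith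
    have hstep := step a ((n:ℝ)+1) (s n a) (s (n+1) a) (s (n+2) a) ha
      (by linarith [Nat.cast_nonneg (α := ℝ) n]) (s_pos a ha n) (s_pos a ha (n+1)) hrec
      (by nlinarith [H1]) (by nlinarith [H2])
    obtain ⟨G1, G2⟩ := hstep
    constructor
    · push_cast
      nlinarith [G1]
    · push_cast
      nlinarith [G2]

/-- Strict concavity of `phi` in `n`. -/
lemma phi_concave (a : ℝ) (ha : 0 < a) (j : ℕ) :
    phi j a + phi (j+2) a < 2 * phi (j+1) a := by
  obtain ⟨H1, _⟩ := invariant a ha (j+1)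
  have p0 := s_pos a ha j
  have p1 := s_pos a ha (j+1)
  have p2 := s_pos a ha (j+2)
  have p3 := s_pos a ha (j+3)
  have e1 : a * s j a = (a+(j:ℝ)+2) * s (j+1) a - ((j:ℝ)+2) * s (j+2) a := by
    have := s_rec a j
    linarith [this]
  have e2 : ((j:ℝ)+3) * s (j+3) a = (a+(j:ℝ)+3) * s (j+2) a - a * s (j+1) a := by
    have h := s_rec a (j+1)
    push_cast at h
    linarith [h]
  -- key identity: a(j+3)·T = (s_{j+2} - s_{j+1})·F
  have hkey : a*((j:ℝ)+3)*(2*(s (j+1) a)^2 * s (j+3) a - s j a * s (j+2) a * s (j+3) a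
        - s (j+1) a * (s (j+2) a)^2)
      = (s (j+2) a - s (j+1) a) *
        (2*a^2*(s (j+1) a)^2 - a*(a+3*((j:ℝ)+1)+5)*(s (j+1) a)*(s (j+2) a)
          + (((j:ℝ)+1)+1)*(a+((j:ℝ)+1)+2)*(s (j+2) a)^2) := by
    linear_combination (a * s (j+1) a * s (j+2) a - (a+(j:ℝ)+3)*(s (j+2) a)^2) * e1
      + (a*(2*(s (j+1) a)^2 - s j a * s (j+2) a)) * e2
  have hF : 0 < 2*a^2*(s (j+1) a)^2 - a*(a+3*((j:ℝ)+1)+5)*(s (j+1) a)*(s (j+2) a)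
      + (((j:ℝ)+1)+1)*(a+((j:ℝ)+1)+2)*(s (j+2) a)^2 := by
    push_cast at H1 ⊢
    nlinarith [H1]
  have hdiff : 0 < s (j+2) a - s (j+1) a := by
    have := s_lt_succ a ha (j+1); linarith
  have hT : 0 < 2*(s (j+1) a)^2 * s (j+3) a - s j a * s (j+2) a * s (j+3) a
      - s (j+1) a * (s (j+2) a)^2 := by
    have hprod : 0 < (s (j+2) a - s (j+1) a) *
        (2*a^2*(s (j+1) a)^2 - a*(a+3*((j:ℝ)+1)+5)*(s (j+1) a)*(s (j+2) a)
          + (((j:ℝ)+1)+1)*(a+((j:ℝ)+1)+2)*(s (j+2) a)^2) := mul_pos hdiff hF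
    have haj : 0 < a*((j:ℝ)+3) := by positivity
    nlinarith [hkey, hprod, haj]
  -- convert to phi inequality
  rw [phi, phi, phi]
  rw [div_add_div _ _ (ne_of_gt p1) (ne_of_gt p3), div_lt_iff₀ (by positivity)]
  have h2 : (2 : ℝ) * (s (j+1) a / s (j+2) a) * (s (j+1) a * s (j+3) a)
      = (2*(s (j+1) a)^2 * s (j+3) a) / s (j+2) a := by
    field_simp
  rw [h2, lt_div_iff₀ p2]
  nlinarith [hT, p2]

theorem stmt_7 (a : ℝ) (ha : 0 < a) (n r m : ℕ) (hr : 1 ≤ r) (hrm : r < m) :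
    ((m - r : ℝ) / m) * phi n a + ((r : ℝ) / m) * phi (n + m) a < phi (n + r) a := by
  -- the difference sequence
  set D : ℕ → ℝ := fun i => phi (i+1) a - phi i a with hD
  have hstep : ∀ i, D (i+1) < D i := by
    intro i
    have := phi_concave a ha i
    simp only [hD]
    have e : i + 1 + 1 = i + 2 := rfl
    rw [e]
    linarith
  have hanti : StrictAnti D := strictAnti_nat_of_succ_lt hstep
  -- telescoping sums
  have hsumA : ∑ i ∈ Finset.range r, D (n+i) = phi (n+r) a - phi n a := by
    have h := Finset.sum_range_sub (fun i => phi (n+i) a) r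
    simp only [Nat.add_zero] at h
    rw [← h]
    apply Finset.sum_congr rfl
    intro i _
    simp only [hD]
    congr 1
  have hsumB : ∑ i ∈ Finset.range (m-r), D (n+r+i) = phi (n+m) a - phi (n+r) a := by
    have h := Finset.sum_range_sub (fun i => phi (n+r+i) a) (m-r)
    simp only [Nat.add_zero] at h
    have hmr : n + r + (m - r) = n + m := by omega
    rw [hmr] at h
    rw [← h]
    apply Finset.sum_congr rfl
    intro i _
    simp only [hD]
    congr 1
  -- bounds on sums
  have hboundA : (r:ℝ) * D (n+r-1) ≤ ∑ i ∈ Finset.range r, D (n+i) := by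
    have h := Finset.card_nsmul_le_sum (Finset.range r) (fun i => D (n+i)) (D (n+r-1))
      (fun i hi => by
        apply hanti.antitone
        have : i < r := Finset.mem_range.1 hi
        omega)
    simpa [nsmul_eq_mul] using h
  have hboundB : ∑ i ∈ Finset.range (m-r), D (n+r+i) ≤ ((m:ℝ) - r) * D (n+r) := by
    have h := Finset.sum_le_card_nsmul (Finset.range (m-r)) (fun i => D (n+r+i)) (D (n+r))
      (fun i hi => by
        apply hanti.antitone
        omega)
    have hcast : ((m - r : ℕ) : ℝ) = (m:ℝ) - r := by
      push_cast [Nat.cast_sub hrm.le]; ring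
    rw [Finset.card_range, nsmul_eq_mul, hcast] at h
    exact h
  have hstrict : D (n+r) < D (n+r-1) := by
    apply hanti
    omega
  -- combine
  have hrpos : (0:ℝ) < r := by exact_mod_cast hr
  have hmrpos : (0:ℝ) < (m:ℝ) - r := by
    have : (r:ℝ) < m := by exact_mod_cast hrm
    linarith
  have hmpos : (0:ℝ) < m := by
    have : 0 < m := by omega
    exact_mod_cast this
  have hAB : (r:ℝ) * (phi (n+m) a - phi (n+r) a) < ((m:ℝ) - r) * (phi (n+r) a - phi n a) := by
    calc (r:ℝ) * (phi (n+m) a - phi (n+r) a)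
        ≤ (r:ℝ) * (((m:ℝ) - r) * D (n+r)) := by
          rw [← hsumB]
          apply mul_le_mul_of_nonneg_left hboundB hrpos.le
      _ < (r:ℝ) * (((m:ℝ) - r) * D (n+r-1)) := by
          apply mul_lt_mul_of_pos_left _ hrpos
          exact mul_lt_mul_of_pos_left hstrict hmrpos
      _ = ((m:ℝ) - r) * ((r:ℝ) * D (n+r-1)) := by ring
      _ ≤ ((m:ℝ) - r) * (phi (n+r) a - phi n a) := by
          rw [← hsumA]
          apply mul_le_mul_of_nonneg_left hboundA hmrpos.le
  rw [div_mul_eq_mul_div, div_mul_eq_mul_div, ← add_div, div_lt_iff₀ hmpos]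
  nlinarith [hAB]
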